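/- If R is positive definite, then every x ∈ Ω⁺ satisfying diag(∇H(x)) > −G(x̄)diag(ū)/λ_min(R) (entrywise, i.e., (∇H(x))_i > −Ḡ_{ii}ū_i/λ_min(R) for all i ∉ I) satisfies R + Z(x) > 0, where Z(x) = G(x̄)diag(ū)G(x). -/

import Mathlib

open Matrix

/-- If the dissipation matrix `R` is positive definite, then every `x ∈ Ω⁺` with
`(∇H(x))ᵢ > −Ḡᵢᵢ ūᵢ / λ_min(R)` for all `i ∉ I` satisfies `R + Z(x) > 0`, where
`Z(x) = G(x̄) diag(ū) G(x)` and `G(x)` is diagonal with entries `1/(∇H(x))ᵢ` for `i ∉ I`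
and `0` for `i ∈ I`. -/
theorem lower_bounds_gradH_posDef (n : ℕ) (hn : 0 < n)
    (R : Matrix (Fin n) (Fin n) ℝ) (hR : R.PosDef)
    (gradH : (Fin n → ℝ) → (Fin n → ℝ))
    (I : Set (Fin n)) [DecidablePred (· ∈ I)]
    (ubar : Fin n → ℝ) (hubar : ∀ i ∈ I, ubar i = 0)
    (xbar : Fin n → ℝ) (hxbar : ∀ i ∉ I, 0 < gradH xbar i)
    (G : (Fin n → ℝ) → Matrix (Fin n) (Fin n) ℝ)
    (hG : ∀ x, G x = Matrix.diagonal (fun i => if i ∈ I then 0 else (gradH x i)⁻¹)) :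
    ∀ x : Fin n → ℝ, (∀ i ∉ I, 0 < gradH x i) →
      (∀ i ∉ I, -(G xbar i i * ubar i) / (⨅ j, hR.1.eigenvalues j) < gradH x i) →
      (R + G xbar * Matrix.diagonal ubar * G x).PosDef := by
  intro x hx hbound
  have hne : Nonempty (Fin n) := ⟨⟨0, hn⟩⟩
  set μ := ⨅ j, hR.1.eigenvalues j with hμdef
  have hμle : ∀ j, μ ≤ hR.1.eigenvalues j := fun j =>
    ciInf_le (Set.Finite.bddBelow (Set.finite_range _)) j
  have hμpos : 0 < μ := by
    obtain ⟨j, hj⟩ := Finite.exists_min hR.1.eigenvalues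
    exact lt_of_lt_of_le (hR.eigenvalues_pos j) (le_ciInf hj)
  -- Z is a diagonal matrix
  have hZ : G xbar * Matrix.diagonal ubar * G x
      = Matrix.diagonal (fun i => if i ∈ I then 0
          else (gradH xbar i)⁻¹ * ubar i * (gradH x i)⁻¹) := by
    rw [hG, hG, diagonal_mul_diagonal, diagonal_mul_diagonal]
    ext i j
    rcases eq_or_ne i j with rfl | hij
    · by_cases hi : i ∈ I <;> simp [Matrix.diagonal_apply_eq, hi]
    · simp [Matrix.diagonal_apply_ne _ hij]
  have key : R + G xbar * Matrix.diagonal ubar * G x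
      = (R - μ • (1 : Matrix (Fin n) (Fin n) ℝ))
        + (μ • (1 : Matrix (Fin n) (Fin n) ℝ) + G xbar * Matrix.diagonal ubar * G x) := by
    abel
  rw [key]
  have h1 : (R - μ • (1 : Matrix (Fin n) (Fin n) ℝ)).PosSemidef := by
    have hspec := hR.1.spectral_theorem
    simp only [Unitary.conjStarAlgAut_apply, Unitary.coe_star] at hspec
    set U := (hR.1.eigenvectorUnitary : Matrix (Fin n) (Fin n) ℝ) with hU
    have hUU : U * star U = 1 := mem_unitaryGroup_iff.mp hR.1.eigenvectorUnitary.2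
    have heq : R - μ • (1 : Matrix (Fin n) (Fin n) ℝ)
        = U * Matrix.diagonal (fun i => hR.1.eigenvalues i - μ) * star U := by
      have hdiag : Matrix.diagonal (fun i => hR.1.eigenvalues i - μ)
          = Matrix.diagonal (RCLike.ofReal ∘ hR.1.eigenvalues)
            - μ • (1 : Matrix (Fin n) (Fin n) ℝ) := by
        rw [smul_one_eq_diagonal, ← diagonal_sub]
        congr 1
      rw [hdiag, Matrix.mul_sub, Matrix.sub_mul, ← hspec]
      congr 1
      rw [Matrix.mul_smul, Matrix.smul_mul, Matrix.mul_one, hUU]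
    rw [heq]
    have hd : (Matrix.diagonal (fun i => hR.1.eigenvalues i - μ)).PosSemidef :=
      posSemidef_diagonal_iff.mpr fun i => sub_nonneg.mpr (hμle i)
    exact hd.mul_mul_conjTranspose_same U
  have h2 : (μ • (1 : Matrix (Fin n) (Fin n) ℝ)
      + G xbar * Matrix.diagonal ubar * G x).PosDef := by
    rw [hZ, smul_one_eq_diagonal, diagonal_add]
    refine posDef_diagonal_iff.mpr fun i => ?_
    by_cases hi : i ∈ I
    · simpa [hi] using hμpos
    · simp only [hi, if_false]
      have hg : 0 < gradH x i := hx i hi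
      have hb := hbound i hi
      rw [hG, diagonal_apply_eq] at hb
      simp only [hi, if_false] at hb
      set a := (gradH xbar i)⁻¹ * ubar i with ha
      have h1' : -a < gradH x i * μ := by
        rwa [div_lt_iff₀ hμpos] at hb
      have h2' : -μ < a / gradH x i := by
        rw [lt_div_iff₀ hg]; nlinarith
      have : a * (gradH x i)⁻¹ = a / gradH x i := by ring
      rw [this]; linarith
  exact Matrix.PosDef.posSemidef_add h1 h2
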